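/- Let μ, τ be real numbers and σ > 0. The supremum of E[(X − τ)₊] over all real-valued random variables X (equivalently, Borel probability measures on ℝ) satisfying E[X] = μ and E[X²] = σ² + μ² equals ( (μ − τ) + √(σ² + (μ − τ)²) ) / 2. -/

import Mathlib

open MeasureTheory

lemma integrable_dirac_aux {f : ℝ → ℝ} (hf : Measurable f) (a : ℝ) :
    Integrable f (Measure.dirac a) := by
  refine ⟨hf.aestronglyMeasurable, ?_⟩
  rw [HasFiniteIntegral, lintegral_dirac]
  exact ENNReal.coe_lt_top

lemma integral_two_point (f : ℝ → ℝ) (hf : Measurable f) (a b p q : ℝ)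
    (hp : 0 ≤ p) (hq : 0 ≤ q) :
    ∫ x, f x ∂(ENNReal.ofReal p • Measure.dirac a + ENNReal.ofReal q • Measure.dirac b)
      = p * f a + q * f b := by
  rw [integral_add_measure
      ((integrable_dirac_aux hf a).smul_measure ENNReal.ofReal_ne_top)
      ((integrable_dirac_aux hf b).smul_measure ENNReal.ofReal_ne_top),
    integral_smul_measure, integral_smul_measure, integral_dirac _ _ ,
    integral_dirac _ _, ENNReal.toReal_ofReal hp, ENNReal.toReal_ofReal hq]
  simp [smul_eq_mul]

/-- Sharp upper first partial moment (Lo-type) bound (C4): the supremum of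
`E[(X - τ)₊]` over Borel probability measures on `ℝ` with mean `μ` and second
moment `σ² + μ²` equals `((μ - τ) + √(σ² + (μ - τ)²)) / 2`. -/
theorem stmt_15 (μ τ σ : ℝ) (hσ : 0 < σ) :
    sSup {p : ℝ | ∃ m : Measure ℝ, IsProbabilityMeasure m ∧
        Integrable (fun x : ℝ => x) m ∧ Integrable (fun x : ℝ => x ^ 2) m ∧
        (∫ x, x ∂m) = μ ∧ (∫ x, x ^ 2 ∂m) = σ ^ 2 + μ ^ 2 ∧
        p = ∫ x, max (x - τ) 0 ∂m} =
      ((μ - τ) + Real.sqrt (σ ^ 2 + (μ - τ) ^ 2)) / 2 := by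
  set d : ℝ := μ - τ with hd
  set s : ℝ := Real.sqrt (σ ^ 2 + d ^ 2) with hs
  have hs2 : s ^ 2 = σ ^ 2 + d ^ 2 := Real.sq_sqrt (by positivity)
  have hspos : 0 < s := Real.sqrt_pos.2 (by positivity)
  have hds : |d| < s := by
    nlinarith [abs_nonneg d, sq_abs d]
  have hdlt : -s < d := neg_lt_of_abs_lt hds
  have hdlt' : d < s := lt_of_abs_lt hds
  have hμτ : μ = τ + d := by rw [hd]; ring
  apply IsGreatest.csSup_eq
  constructor
  · -- membership: the two-point measure attains the bound
    set p : ℝ := (s + d) / (2 * s) with hp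
    set q : ℝ := (s - d) / (2 * s) with hq
    have hp0 : 0 ≤ p := div_nonneg (by linarith) (by linarith)
    have hq0 : 0 ≤ q := div_nonneg (by linarith) (by linarith)
    have hpq : p + q = 1 := by
      rw [hp, hq, ← add_div, show s + d + (s - d) = 2 * s by ring]
      exact div_self (by positivity)
    have hpmq : s * (p - q) = d := by
      rw [hp, hq, div_sub_div_same, show s + d - (s - d) = 2 * d by ring, mul_div_assoc',
        show s * (2 * d) = d * (2 * s) by ring, mul_div_assoc,
        div_self (by positivity : (2:ℝ) * s ≠ 0), mul_one]
    refine ⟨ENNReal.ofReal p • Measure.dirac (τ + s) + ENNReal.ofReal q • Measure.dirac (τ - s),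
      ?_, ?_, ?_, ?_, ?_, ?_⟩
    · refine ⟨?_⟩
      rw [Measure.add_apply, Measure.smul_apply, Measure.smul_apply,
        Measure.dirac_apply_of_mem (Set.mem_univ _),
        Measure.dirac_apply_of_mem (Set.mem_univ _), smul_eq_mul, smul_eq_mul,
        mul_one, mul_one, ← ENNReal.ofReal_add hp0 hq0, hpq, ENNReal.ofReal_one]
    · exact ((integrable_dirac_aux (by fun_prop) _).smul_measure ENNReal.ofReal_ne_top).add_measure
        ((integrable_dirac_aux (by fun_prop) _).smul_measure ENNReal.ofReal_ne_top)
    · exact ((integrable_dirac_aux (by fun_prop) _).smul_measure ENNReal.ofReal_ne_top).add_measure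
        ((integrable_dirac_aux (by fun_prop) _).smul_measure ENNReal.ofReal_ne_top)
    · rw [integral_two_point (fun x : ℝ => x) (by fun_prop) _ _ _ _ hp0 hq0]
      calc p * (τ + s) + q * (τ - s) = τ * (p + q) + s * (p - q) := by ring
        _ = μ := by rw [hpq, hpmq, hμτ]; ring
    · rw [integral_two_point (fun x : ℝ => x ^ 2) (by fun_prop) _ _ _ _ hp0 hq0]
      calc p * (τ + s) ^ 2 + q * (τ - s) ^ 2
          = (p + q) * (τ ^ 2 + s ^ 2) + 2 * τ * (s * (p - q)) := by ring
        _ = σ ^ 2 + μ ^ 2 := by rw [hpq, hpmq, hs2, hμτ]; ring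
    · rw [integral_two_point (fun x : ℝ => max (x - τ) 0) (by fun_prop) _ _ _ _ hp0 hq0]
      have h1 : max (τ + s - τ) 0 = s := by
        rw [max_eq_left (by linarith)]; ring
      have h2 : max (τ - s - τ) 0 = 0 := by
        rw [max_eq_right (by linarith)]
      rw [h1, h2, mul_zero, add_zero, hp, div_mul_eq_mul_div,
        mul_div_mul_right _ _ hspos.ne']
      ring
  · -- upper bound
    rintro y ⟨m, hm, h1, h2, hμ, hσ2, rfl⟩
    have hX2 : MemLp (fun x : ℝ => x) 2 m :=
      (memLp_two_iff_integrable_sq h1.aestronglyMeasurable).2 h2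
    have hG : MemLp (fun x : ℝ => x - τ) 2 m := hX2.sub (memLp_const τ)
    have hGabs : MemLp (fun x : ℝ => |x - τ|) 2 m := hG.abs
    have hint_sub : Integrable (fun x : ℝ => x - τ) m := h1.sub (integrable_const τ)
    have hint_abs : Integrable (fun x : ℝ => |x - τ|) m := hint_sub.abs
    have hvar := ProbabilityTheory.variance_nonneg (fun x : ℝ => |x - τ|) m
    rw [ProbabilityTheory.variance_eq_sub hGabs] at hvar
    have hIsq : (∫ x, |x - τ| ^ 2 ∂m) = σ ^ 2 + d ^ 2 := by
      have heq : ∀ x : ℝ, |x - τ| ^ 2 = x ^ 2 - (2 * τ) * x + τ ^ 2 := by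
        intro x; rw [sq_abs]; ring
      simp only [heq]
      have hi1 : Integrable (fun x : ℝ => x ^ 2 - 2 * τ * x) m := h2.sub (h1.const_mul (2 * τ))
      rw [integral_add hi1 (integrable_const _),
        integral_sub h2 (h1.const_mul _), integral_const_mul, hμ, hσ2,
        integral_const, probReal_univ, smul_eq_mul, one_mul]
      rw [hd]; ring
    have hvar' : 0 ≤ (σ ^ 2 + d ^ 2) - (∫ x, |x - τ| ∂m) ^ 2 := by
      rw [← hIsq]; simpa using hvar
    have habs_le : (∫ x, |x - τ| ∂m) ≤ s := by
      have h0 : 0 ≤ ∫ x, |x - τ| ∂m := integral_nonneg fun x => abs_nonneg _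
      nlinarith
    have hmax : ∀ x : ℝ, max (x - τ) 0 = ((x - τ) + |x - τ|) / 2 := by
      intro x
      rcases le_total (x - τ) 0 with h | h
      · rw [max_eq_right h, abs_of_nonpos h]; ring
      · rw [max_eq_left h, abs_of_nonneg h]; ring
    calc (∫ x, max (x - τ) 0 ∂m)
        = ((∫ x, x - τ ∂m) + ∫ x, |x - τ| ∂m) / 2 := by
          simp only [hmax]
          rw [integral_div, integral_add hint_sub hint_abs]
      _ ≤ (d + s) / 2 := by
          rw [integral_sub h1 (integrable_const τ), integral_const, probReal_univ,
            smul_eq_mul, one_mul, hμ]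
          linarith
      _ = ((μ - τ) + Real.sqrt (σ ^ 2 + (μ - τ) ^ 2)) / 2 := by rw [hd, hs]
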